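/- Let n ≥ 3 be an integer. The permutability graph of non-normal subgroups Γ_N(D_n) of the dihedral group D_n has no edges (i.e., is totally disconnected) if and only if n is an odd prime. -/

import Mathlib

open scoped Pointwise

/-- The permutability graph of non-normal subgroups `Γ_N(G)`: vertices are the
non-normal (hence proper) subgroups of `G`, and two distinct vertices are adjacent
iff the corresponding subgroups permute, i.e. `HK = KH` as subsets of `G`. -/
def permGraphN (G : Type*) [Group G] :
    SimpleGraph {H : Subgroup G // ¬ H.Normal} where
  Adj H K := H ≠ K ∧ (H.1 : Set G) * (K.1 : Set G) = (K.1 : Set G) * (H.1 : Set G)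
  symm := ⟨fun _ _ ⟨hne, h⟩ => ⟨hne.symm, h.symm⟩⟩
  loopless := ⟨fun _ ⟨hne, _⟩ => hne rfl⟩

/-- The permutability graph of subgroups `Γ(G)`: vertices are the proper nontrivial
subgroups of `G`, and two distinct vertices are adjacent iff the corresponding
subgroups permute, i.e. `HK = KH` as subsets of `G`. -/
def permGraph (G : Type*) [Group G] :
    SimpleGraph {H : Subgroup G // H ≠ ⊥ ∧ H ≠ ⊤} where
  Adj H K := H ≠ K ∧ (H.1 : Set G) * (K.1 : Set G) = (K.1 : Set G) * (H.1 : Set G)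
  symm := ⟨fun _ _ ⟨hne, h⟩ => ⟨hne.symm, h.symm⟩⟩
  loopless := ⟨fun _ ⟨hne, _⟩ => hne rfl⟩

namespace StmtAux

open DihedralGroup

variable {n : ℕ}

/-- The reflection subgroup `{1, sr i}`. -/
def refl (n : ℕ) (i : ZMod n) : Subgroup (DihedralGroup n) where
  carrier := {1, sr i}
  one_mem' := Or.inl rfl
  mul_mem' := by
    rintro x y (rfl | rfl) (rfl | rfl)
    · exact Or.inl (one_mul 1)
    · exact Or.inr (one_mul _)
    · exact Or.inr (mul_one _)
    · left; show sr i * sr i = 1; rw [sr_mul_sr, sub_self, r_zero]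
  inv_mem' := by
    rintro x (rfl | rfl)
    · exact Or.inl inv_one
    · exact Or.inr rfl

lemma mem_refl {i : ZMod n} {x : DihedralGroup n} :
    x ∈ refl n i ↔ x = 1 ∨ x = sr i := Iff.rfl

lemma coe_refl (i : ZMod n) : ((refl n i : Subgroup (DihedralGroup n)) : Set (DihedralGroup n)) = {1, sr i} := rfl

lemma refl_not_normal (hn : 3 ≤ n) (i : ZMod n) : ¬ (refl n i).Normal := by
  intro h
  have h2 : r 1 * sr i * (r 1)⁻¹ ∈ refl n i := h.conj_mem (sr i) (Or.inr rfl) (r 1)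
  have : r 1 * sr i * (r 1)⁻¹ = sr (i - 2) := by
    show r 1 * sr i * r (-1) = sr (i - 2)
    simp only [r_mul_sr, sr_mul_r]
    ring_nf
  rw [this] at h2
  rcases h2 with h2 | h2
  · exact absurd (h2.trans one_def) (by intro h; cases h)
  · simp only [Set.mem_singleton_iff, sr.injEq] at h2
    have h3 : (2 : ZMod n) = 0 := by linear_combination -h2
    have : ((2 : ℕ) : ZMod n) = 0 := by exact_mod_cast h3
    rw [ZMod.natCast_eq_zero_iff] at this
    exact absurd (Nat.le_of_dvd (by norm_num) this) (by omega)

lemma pair_mul_pair {G : Type*} [Group G] (a b c d : G) :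
    ({a, b} : Set G) * ({c, d} : Set G) = {a * c, a * d, b * c, b * d} := by
  ext x
  simp only [Set.mem_mul, Set.mem_insert_iff, Set.mem_singleton_iff]
  constructor
  · rintro ⟨u, (rfl | rfl), v, (rfl | rfl), rfl⟩ <;> tauto
  · rintro (rfl | rfl | rfl | rfl)
    · exact ⟨a, Or.inl rfl, c, Or.inl rfl, rfl⟩
    · exact ⟨a, Or.inl rfl, d, Or.inr rfl, rfl⟩
    · exact ⟨b, Or.inr rfl, c, Or.inl rfl, rfl⟩
    · exact ⟨b, Or.inr rfl, d, Or.inr rfl, rfl⟩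

lemma mul_coe_of_le {G : Type*} [Group G] {H K : Subgroup G} (h : H ≤ K) :
    (H : Set G) * (K : Set G) = (K : Set G) := by
  apply Set.Subset.antisymm
  · rintro x ⟨a, ha, b, hb, rfl⟩
    exact K.mul_mem (h ha) hb
  · intro x hx
    exact ⟨1, H.one_mem, x, hx, one_mul x⟩

lemma coe_mul_of_le {G : Type*} [Group G] {H K : Subgroup G} (h : H ≤ K) :
    (K : Set G) * (H : Set G) = (K : Set G) := by
  apply Set.Subset.antisymm
  · rintro x ⟨a, ha, b, hb, rfl⟩
    exact K.mul_mem ha (h hb)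
  · intro x hx
    exact ⟨x, hx, 1, H.one_mem, mul_one x⟩

/-- helper to read off the `ZMod n` index of an element -/
def toZ : DihedralGroup n → ZMod n
  | r a => a
  | sr a => a

/-- "dihedral" subgroup associated with an additive subgroup of `ZMod n`. -/
def dsub (n : ℕ) (A : AddSubgroup (ZMod n)) : Subgroup (DihedralGroup n) where
  carrier := {x | toZ x ∈ A}
  one_mem' := A.zero_mem
  mul_mem' := by
    rintro (a | a) (b | b) ha hb
    · exact A.add_mem ha hb
    · exact A.sub_mem hb ha
    · exact A.add_mem ha hb
    · exact A.sub_mem hb ha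
  inv_mem' := by
    rintro (a | a) ha
    · exact A.neg_mem ha
    · exact ha

lemma mem_dsub {A : AddSubgroup (ZMod n)} {x : DihedralGroup n} :
    x ∈ dsub n A ↔ toZ x ∈ A := Iff.rfl

/-- classification: every non-normal subgroup of `D_p`, `p` odd prime, is a reflection subgroup -/
lemma classify (hp : n.Prime) (H : Subgroup (DihedralGroup n)) (hH : ¬ H.Normal) :
    ∃ i, H = refl n i := by
  haveI : Fact n.Prime := ⟨hp⟩
  -- Claim A: no nontrivial rotations in H
  have claimA : ∀ a : ZMod n, r a ∈ H → a = 0 := by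
    intro a ha
    by_contra ha0
    -- all rotations are in H
    have hnsmul : ∀ k : ℕ, r (k • a) ∈ H := by
      intro k
      induction k with
      | zero => simpa using H.one_mem
      | succ k ih =>
          have := H.mul_mem ih ha
          rw [r_mul_r] at this
          convert this using 2
          rw [succ_nsmul]
    have hrall : ∀ b : ZMod n, r b ∈ H := by
      intro b
      have hb : ((b * a⁻¹).val) • a = b := by
        rw [nsmul_eq_mul, ZMod.natCast_val, ZMod.cast_id, mul_assoc,
          inv_mul_cancel₀ ha0, mul_one]
      simpa [hb] using hnsmul ((b * a⁻¹).val)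
    by_cases hsr : ∃ j, sr j ∈ H
    · obtain ⟨j, hj⟩ := hsr
      have hsall : ∀ b : ZMod n, sr b ∈ H := by
        intro b
        have := H.mul_mem hj (hrall (b - j))
        rwa [sr_mul_r, add_sub_cancel] at this
      have : H = ⊤ := by
        rw [eq_top_iff]
        rintro (b | b) _
        · exact hrall b
        · exact hsall b
      have htop : (⊤ : Subgroup (DihedralGroup n)).Normal := inferInstance
      exact hH (this ▸ htop)
    · push_neg at hsr
      refine hH ⟨?_⟩
      rintro (b | b) hb g
      · rcases g with c | c
        · have : r c * r b * (r c)⁻¹ = r b := by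
            show r c * r b * r (-c) = r b
            simp only [r_mul_r]; ring_nf
          rw [this]; exact hb
        · have : sr c * r b * (sr c)⁻¹ = r (-b) := by
            show sr c * r b * sr c = r (-b)
            simp only [sr_mul_r, sr_mul_sr]; ring_nf
          rw [this]; exact hrall _
      · exact absurd hb (hsr b)
  -- Claim B: some reflection is in H
  have hbotn : (⊥ : Subgroup (DihedralGroup n)).Normal := inferInstance
  have hbot : H ≠ ⊥ := fun h => hH (h ▸ hbotn)
  obtain ⟨x, hx, hx1⟩ := (Subgroup.bot_or_exists_ne_one H).resolve_left hbot
  obtain ⟨i, hi⟩ : ∃ i, sr i ∈ H := by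
    rcases x with a | a
    · exact absurd (by rw [claimA a hx]; rfl) hx1
    · exact ⟨a, hx⟩
  refine ⟨i, ?_⟩
  ext y
  constructor
  · intro hy
    rcases y with a | a
    · left; rw [claimA a hy]; rfl
    · right
      have := H.mul_mem hi hy
      rw [sr_mul_sr] at this
      have h0 := claimA _ this
      have : a = i := by linear_combination h0
      rw [this]; rfl
  · rintro (rfl | rfl)
    · exact H.one_mem
    · exact hi

end StmtAux


open StmtAux DihedralGroup

/-- For an integer `n ≥ 3`, the permutability graph of non-normal
subgroups `Γ_N(D_n)` has no edges iff `n` is an odd prime. -/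
theorem stmt_0 (n : ℕ) (hn : 3 ≤ n) :
    (∀ H K : {H : Subgroup (DihedralGroup n) // ¬ H.Normal},
        ¬ (permGraphN (DihedralGroup n)).Adj H K) ↔ (Odd n ∧ n.Prime) := by
  haveI : NeZero n := ⟨by omega⟩
  have hdvd2 : ¬ ((2:ZMod n) = 0) := by
    intro h
    have : ((2 : ℕ) : ZMod n) = 0 := by exact_mod_cast h
    rw [ZMod.natCast_eq_zero_iff] at this
    exact absurd (Nat.le_of_dvd (by norm_num) this) (by omega)
  constructor
  · intro hE
    by_contra hcon
    rw [not_and_or] at hcon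
    suffices hS : ∃ H K : Subgroup (DihedralGroup n), ∃ _ : ¬ H.Normal, ∃ _ : ¬ K.Normal,
        H ≠ K ∧ (H : Set (DihedralGroup n)) * (K : Set (DihedralGroup n))
          = (K : Set (DihedralGroup n)) * (H : Set (DihedralGroup n)) by
      obtain ⟨H, K, hH, hK, hne, hcomm⟩ := hS
      exact hE ⟨H, hH⟩ ⟨K, hK⟩ ⟨fun h => hne (congrArg Subtype.val h), hcomm⟩
    by_cases hodd : Odd n
    · -- n odd composite : take {1, sr 0} inside ⟨r^d, s⟩
      have hnp : ¬ n.Prime := hcon.resolve_left (fun h => h hodd)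
      set d := n.minFac with hd_def
      have hdp : d.Prime := Nat.minFac_prime (by omega)
      have hdvd : d ∣ n := Nat.minFac_dvd n
      have hdn : d ≠ n := fun h => hnp (h ▸ hdp)
      have hdlt : d < n := lt_of_le_of_ne (Nat.le_of_dvd (by omega) hdvd) hdn
      have hd2 : 2 ≤ d := hdp.two_le
      set A := AddSubgroup.zmultiples ((d : ℕ) : ZMod n) with hA_def
      refine ⟨refl n 0, dsub n A, refl_not_normal hn 0, ?_, ?_, ?_⟩
      · -- dsub not normal
        intro hnorm
        have h0 : sr (0 : ZMod n) ∈ dsub n A := by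
          show (0 : ZMod n) ∈ A; exact A.zero_mem
        have h2 := hnorm.conj_mem (sr 0) h0 (r 1)
        have heq : r (1 : ZMod n) * sr 0 * (r 1)⁻¹ = sr (-2) := by
          show r (1 : ZMod n) * sr 0 * r (-1) = sr (-2)
          simp only [r_mul_sr, sr_mul_r]
          ring_nf
        rw [heq] at h2
        have h3 : (-2 : ZMod n) ∈ A := h2
        rw [hA_def, AddSubgroup.mem_zmultiples_iff] at h3
        obtain ⟨k, hk⟩ := h3
        rw [zsmul_eq_mul] at hk
        have h4 : ((k * (d:ℕ) + 2 : ℤ) : ZMod n) = 0 := by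
          push_cast
          linear_combination hk
        rw [ZMod.intCast_zmod_eq_zero_iff_dvd] at h4
        have h5 : ((d:ℕ) : ℤ) ∣ (k * (d:ℕ) + 2 : ℤ) :=
          dvd_trans (Int.natCast_dvd_natCast.mpr hdvd) h4
        have h6 : ((d:ℕ) : ℤ) ∣ (2 : ℤ) := (dvd_add_right ⟨k, by ring⟩).mp h5
        have h7 : d ∣ 2 := by exact_mod_cast h6
        have hd2' : d = 2 := le_antisymm (Nat.le_of_dvd (by norm_num) h7) hd2
        rw [Nat.odd_iff] at hodd
        have : 2 ∣ n := hd2' ▸ hdvd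
        omega
      · -- refl n 0 ≠ dsub n A
        intro h
        have hm : r ((d:ℕ) : ZMod n) ∈ dsub n A := by
          show ((d:ℕ) : ZMod n) ∈ A
          exact AddSubgroup.mem_zmultiples _
        rw [← h] at hm
        rcases hm with hm | hm
        · rw [one_def] at hm
          simp only [r.injEq] at hm
          have : ((d:ℕ) : ZMod n) = 0 := hm
          rw [ZMod.natCast_eq_zero_iff] at this
          exact absurd (Nat.le_of_dvd (by omega) this) (by omega)
        · exact absurd (show r ((d:ℕ) : ZMod n) = sr 0 from hm) (by simp)
      · -- products
        have hle : refl n 0 ≤ dsub n A := by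
          rintro x (rfl | rfl)
          · exact (dsub n A).one_mem
          · show (0 : ZMod n) ∈ A; exact A.zero_mem
        rw [mul_coe_of_le hle, coe_mul_of_le hle]
    · -- n even
      rw [Nat.odd_iff] at hodd
      have hev : n % 2 = 0 := by omega
      set m := n / 2 with hm_def
      have hmm : m + m = n := by omega
      have hmlt : m < n := by omega
      have hmpos : 0 < m := by omega
      have hmne : ((m:ℕ) : ZMod n) ≠ 0 := by
        rw [Ne, ZMod.natCast_eq_zero_iff]
        intro h
        exact absurd (Nat.le_of_dvd hmpos h) (by omega)
      have hnegm : -((m:ℕ) : ZMod n) = ((m:ℕ) : ZMod n) := by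
        have : ((m:ℕ) : ZMod n) + ((m:ℕ) : ZMod n) = 0 := by
          rw [← Nat.cast_add, hmm, ZMod.natCast_self]
        linear_combination -this
      refine ⟨refl n 0, refl n ((m:ℕ) : ZMod n), refl_not_normal hn 0,
        refl_not_normal hn _, ?_, ?_⟩
      · intro h
        have hm2 : sr ((m:ℕ) : ZMod n) ∈ refl n ((m:ℕ) : ZMod n) := Or.inr rfl
        rw [← h] at hm2
        rcases hm2 with hm2 | hm2
        · exact absurd (hm2.trans one_def) (by intro h; cases h)
        · simp only [Set.mem_singleton_iff, sr.injEq] at hm2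
          exact hmne hm2
      · rw [coe_refl, coe_refl, pair_mul_pair, pair_mul_pair]
        simp only [one_mul, mul_one, sr_mul_sr, sub_zero, zero_sub, hnegm]
        ext x
        simp only [Set.mem_insert_iff, Set.mem_singleton_iff]
        tauto
  · rintro ⟨hodd, hp⟩ H K hAdj
    obtain ⟨hne, hcomm⟩ := hAdj
    obtain ⟨i, hi⟩ := classify hp H.1 H.2
    obtain ⟨j, hj⟩ := classify hp K.1 K.2
    have hij : i ≠ j := by
      intro h
      exact hne (Subtype.ext (by rw [hi, hj, h]))
    rw [hi, hj, coe_refl, coe_refl, pair_mul_pair, pair_mul_pair] at hcomm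
    simp only [one_mul, mul_one, sr_mul_sr] at hcomm
    have hmem : r (j - i) ∈ ({1, sr i, sr j, r (i - j)} : Set (DihedralGroup n)) := by
      rw [← hcomm]
      right; right; right; rfl
    rcases hmem with h | h | h | h
    · rw [one_def] at h
      simp only [r.injEq] at h
      apply hij
      linear_combination -h
    · exact absurd h (by simp)
    · exact absurd h (by simp)
    · simp only [Set.mem_singleton_iff, r.injEq] at h
      haveI : Fact n.Prime := ⟨hp⟩
      have h2 : (2 : ZMod n) * (i - j) = 0 := by linear_combination -h
      rcases mul_eq_zero.mp h2 with h3 | h3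
      · exact hdvd2 h3
      · exact hij (by linear_combination h3)
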